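/- (Lossless MLP expansion.) Let MLP(x) = W₂·σ(W₁·x + b₁) + b₂ with W₁ ∈ ℝ^{H_S×D_S}, b₁ ∈ ℝ^{H_S}, W₂ ∈ ℝ^{D_S×H_S}, b₂ ∈ ℝ^{D_S}, and σ : ℝ → ℝ applied entrywise. Let D_T ≥ D_S and H_T ≥ H_S. Construct the expanded parameters as follows: (1) let N₁ ∈ ℝ^{H_T×D_S} be the row-circular expansion of W₁ (N₁[i,:] = W₁[i mod H_S,:]) and let W₁* ∈ ℝ^{H_T×D_T} be any column-random expansion of N₁, i.e. W₁* = [N₁¹, …, N₁^{k_D}, ζ] with ∑_i N₁ⁱ = N₁ and arbitrary ζ ∈ ℝ^{H_T×r_D}, where k_D = ⌊D_T/D_S⌋ and r_D = D_T mod D_S; set b₁* = V_circ(b₁) ∈ ℝ^{H_T}; (2) let N₂ = [W₂¹, …, W₂^{k_H}, W₂^res] ∈ ℝ^{D_S×H_T} be any column-circular expansion of W₂ (with k_H = ⌊H_T/H_S⌋, r_H = H_T mod H_S, W₂^res + ∑_i W₂ⁱ[:, :r_H] = W₂[:, :r_H], and ∑_i W₂ⁱ[:, r_H:] = W₂[:,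 r_H:]), and let W₂* ∈ ℝ^{D_T×H_T} be the row-average expansion of N₂; set b₂* = V_avg(b₂) ∈ ℝ^{D_T}. Then for every x ∈ ℝ^{D_S}, W₂*·σ(W₁*·V_zero(x) + b₁*) + b₂* = V_avg(MLP(x)). -/

import Mathlib

/-- Index bound for the tail part of an expansion from dimension `DS` to `DT`. -/
theorem sub_lt_mod (DS DT i : ℕ) (hDS : 0 < DS) (hi : i < DT) (h2 : DT / DS * DS ≤ i) :
    i - DT / DS * DS < DT % DS := by
  have h := Nat.div_add_mod' DT DS
  set m := DT / DS * DS
  omega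

/-- Average expansion `V_avg` from `ℝ^{DS}` to `ℝ^{DT}`. -/
noncomputable def vAvg (DS DT : ℕ) (hDS : 0 < DS) (x : Fin DS → ℝ) : Fin DT → ℝ :=
  fun i => if i.val < DT / DS * DS then x ⟨i.val % DS, Nat.mod_lt _ hDS⟩
           else (∑ j, x j) / (DS : ℝ)

/-- Zero expansion `V_zero` from `ℝ^{DS}` to `ℝ^{DT}`. -/
def vZero (DS DT : ℕ) (hDS : 0 < DS) (x : Fin DS → ℝ) : Fin DT → ℝ :=
  fun i => if i.val < DT / DS * DS then x ⟨i.val % DS, Nat.mod_lt _ hDS⟩ else 0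

/-- Circular expansion `V_circ` from `ℝ^{DS}` to `ℝ^{DT}`. -/
def vCirc (DS DT : ℕ) (hDS : 0 < DS) (x : Fin DS → ℝ) : Fin DT → ℝ :=
  fun i => x ⟨i.val % DS, Nat.mod_lt _ hDS⟩

/-- Mean of a vector. -/
noncomputable def meanV {D : ℕ} (x : Fin D → ℝ) : ℝ := (∑ i, x i) / (D : ℝ)

/-- Population variance of a vector. -/
noncomputable def varV {D : ℕ} (x : Fin D → ℝ) : ℝ := (∑ i, (x i - meanV x) ^ 2) / (D : ℝ)

/-- Matrix row-circular expansion: `N[i,:] = M[i mod H_S,:]` for all rows. -/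
def rowCirc (HS HT P : ℕ) (hHS : 0 < HS) (M : Matrix (Fin HS) (Fin P) ℝ) :
    Matrix (Fin HT) (Fin P) ℝ :=
  fun i j => M ⟨i.val % HS, Nat.mod_lt _ hHS⟩ j

/-- Matrix row-average expansion: repeat the rows of `N` cyclically for the first
`⌊D_T/D_S⌋·D_S` rows and fill the remaining rows with the row average of `N`. -/
noncomputable def rowAvg (DS DT P : ℕ) (hDS : 0 < DS) (N : Matrix (Fin DS) (Fin P) ℝ) :
    Matrix (Fin DT) (Fin P) ℝ :=
  fun i j => if i.val < DT / DS * DS then N ⟨i.val % DS, Nat.mod_lt _ hDS⟩ j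
             else (∑ l, N l j) / (DS : ℝ)

/-- Matrix column-random expansion: horizontal concatenation
`[M¹, …, M^k, ζ]` of `k = ⌊D_T/D_S⌋` blocks and an arbitrary block `ζ`. -/
noncomputable def colRand (DS DT P : ℕ) (hDS : 0 < DS)
    (Ms : Fin (DT / DS) → Matrix (Fin P) (Fin DS) ℝ)
    (Z : Matrix (Fin P) (Fin (DT % DS)) ℝ) : Matrix (Fin P) (Fin DT) ℝ :=
  fun i j => if h : j.val < DT / DS * DS
    then Ms ⟨j.val / DS, (Nat.div_lt_iff_lt_mul hDS).mpr h⟩ i ⟨j.val % DS, Nat.mod_lt _ hDS⟩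
    else Z i ⟨j.val - DT / DS * DS, sub_lt_mod DS DT j.val hDS j.isLt (not_lt.mp h)⟩

/-- Matrix column-circular expansion: horizontal concatenation
`[M¹, …, M^k, M^res]` of `k = ⌊H_T/H_S⌋` blocks and a residual block. -/
noncomputable def colCirc (HS HT P : ℕ) (hHS : 0 < HS)
    (Ms : Fin (HT / HS) → Matrix (Fin P) (Fin HS) ℝ)
    (Mres : Matrix (Fin P) (Fin (HT % HS)) ℝ) : Matrix (Fin P) (Fin HT) ℝ :=
  fun i j => if h : j.val < HT / HS * HS
    then Ms ⟨j.val / HS, (Nat.div_lt_iff_lt_mul hHS).mpr h⟩ i ⟨j.val % HS, Nat.mod_lt _ hHS⟩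
    else Mres i ⟨j.val - HT / HS * HS, sub_lt_mod HS HT j.val hHS j.isLt (not_lt.mp h)⟩


section Helpers

private lemma sum_range_add' (g : ℕ → ℝ) (a b : ℕ) :
    ∑ j ∈ Finset.range (a + b), g j
      = (∑ j ∈ Finset.range a, g j) + ∑ j ∈ Finset.range b, g (a + j) := by
  induction b with
  | zero => simp
  | succ b ih =>
    rw [← Nat.add_assoc, Finset.sum_range_succ, ih, Finset.sum_range_succ, add_assoc]

private lemma sum_range_blocks (n k : ℕ) (g : ℕ → ℝ) :
    ∑ j ∈ Finset.range (k * n), g j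
      = ∑ l ∈ Finset.range k, ∑ m ∈ Finset.range n, g (l * n + m) := by
  induction k with
  | zero => simp
  | succ k ih =>
    rw [Nat.succ_mul, sum_range_add', ih, Finset.sum_range_succ]

/-- Key lemma 1: a column-random expansion applied to the zero expansion. -/
private lemma keyC (DS DT P : ℕ) (hDS : 0 < DS) (hDT : DS ≤ DT)
    (Ms : Fin (DT / DS) → Matrix (Fin P) (Fin DS) ℝ)
    (Z : Matrix (Fin P) (Fin (DT % DS)) ℝ) (x : Fin DS → ℝ) (i : Fin P) :
    (colRand DS DT P hDS Ms Z).mulVec (vZero DS DT hDS x) i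
      = ∑ m : Fin DS, (∑ l, Ms l i m) * x m := by
  classical
  have hk0 : 0 < DT / DS := Nat.one_le_div_iff hDS |>.mpr hDT
  set g : ℕ → ℝ := fun j => if h : j < DT / DS * DS
    then Ms ⟨j / DS, (Nat.div_lt_iff_lt_mul hDS).mpr h⟩ i ⟨j % DS, Nat.mod_lt _ hDS⟩
          * x ⟨j % DS, Nat.mod_lt _ hDS⟩
    else 0 with hg
  have h1 : (colRand DS DT P hDS Ms Z).mulVec (vZero DS DT hDS x) i
      = ∑ j ∈ Finset.range DT, g j := by
    simp only [Matrix.mulVec, dotProduct]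
    rw [← Fin.sum_univ_eq_sum_range]
    refine Finset.sum_congr rfl fun j _ => ?_
    by_cases h : (j : ℕ) < DT / DS * DS
    · simp only [hg, colRand, vZero, dif_pos h, if_pos h]
    · simp only [hg, colRand, vZero, dif_neg h, if_neg h, mul_zero]
  have hDD : DT = DT / DS * DS + DT % DS := (Nat.div_add_mod' DT DS).symm
  rw [h1]
  conv_lhs => rw [hDD]
  rw [sum_range_add', sum_range_blocks]
  have htail : ∑ j ∈ Finset.range (DT % DS), g (DT / DS * DS + j) = 0 := by
    refine Finset.sum_eq_zero fun j hj => ?_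
    simp only [hg]
    rw [dif_neg (by omega)]
  rw [htail, add_zero]
  have hblock : ∀ l ∈ Finset.range (DT / DS), ∀ m ∈ Finset.range DS,
      g (l * DS + m) = Ms ⟨l % (DT / DS), Nat.mod_lt _ hk0⟩ i ⟨m % DS, Nat.mod_lt _ hDS⟩
        * x ⟨m % DS, Nat.mod_lt _ hDS⟩ := by
    intro l hl m hm
    rw [Finset.mem_range] at hl hm
    have hlt : l * DS + m < DT / DS * DS := by
      calc l * DS + m < (l + 1) * DS := by rw [Nat.succ_mul]; omega
        _ ≤ DT / DS * DS := Nat.mul_le_mul_right _ hl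
    have hdiv : (l * DS + m) / DS = l := by
      rw [Nat.mul_comm l DS, Nat.mul_add_div hDS, Nat.div_eq_of_lt hm, Nat.add_zero]
    have hmod : (l * DS + m) % DS = m := by
      rw [Nat.mul_comm l DS, Nat.mul_add_mod, Nat.mod_eq_of_lt hm]
    simp only [hg]
    rw [dif_pos hlt]
    congr 2 <;>
      exact Fin.ext (by simp [hdiv, hmod, Nat.mod_eq_of_lt hl, Nat.mod_eq_of_lt hm])
  rw [Finset.sum_congr rfl (fun l hl => Finset.sum_congr rfl (hblock l hl))]
  rw [Finset.sum_comm]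
  rw [← Fin.sum_univ_eq_sum_range
    (fun m => ∑ l ∈ Finset.range (DT / DS),
      Ms ⟨l % (DT / DS), Nat.mod_lt _ hk0⟩ i ⟨m % DS, Nat.mod_lt _ hDS⟩
        * x ⟨m % DS, Nat.mod_lt _ hDS⟩)]
  refine Finset.sum_congr rfl fun m _ => ?_
  have hm : (⟨(m : ℕ) % DS, Nat.mod_lt _ hDS⟩ : Fin DS) = m :=
    Fin.ext (Nat.mod_eq_of_lt m.isLt)
  rw [hm, ← Finset.sum_mul]
  congr 1
  rw [← Fin.sum_univ_eq_sum_range (fun l => Ms ⟨l % (DT / DS), Nat.mod_lt _ hk0⟩ i m)]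
  refine Finset.sum_congr rfl fun l _ => ?_
  congr 1
  exact Fin.ext (Nat.mod_eq_of_lt l.isLt)

/-- Key lemma 2: a column-circular expansion dotted with a circular expansion. -/
private lemma keyD (HS HT P : ℕ) (hHS : 0 < HS) (hHT : HS ≤ HT)
    (Ms : Fin (HT / HS) → Matrix (Fin P) (Fin HS) ℝ)
    (Mres : Matrix (Fin P) (Fin (HT % HS)) ℝ)
    (W2 : Matrix (Fin P) (Fin HS) ℝ)
    (hres : ∀ (i : Fin P) (j : Fin (HT % HS)),
      Mres i j + ∑ l, Ms l i ⟨j.val, j.isLt.trans (Nat.mod_lt HT hHS)⟩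
        = W2 i ⟨j.val, j.isLt.trans (Nat.mod_lt HT hHS)⟩)
    (hrest : ∀ (i : Fin P) (j : Fin HS), HT % HS ≤ j.val → ∑ l, Ms l i j = W2 i j)
    (u : Fin HS → ℝ) (i : Fin P) :
    ∑ j : Fin HT, colCirc HS HT P hHS Ms Mres i j * u ⟨j.val % HS, Nat.mod_lt _ hHS⟩
      = ∑ m : Fin HS, W2 i m * u m := by
  classical
  have hk0 : 0 < HT / HS := Nat.one_le_div_iff hHS |>.mpr hHT
  have hrHS : HT % HS < HS := Nat.mod_lt _ hHS
  set g : ℕ → ℝ := fun j => if h : j < HT / HS * HS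
    then Ms ⟨j / HS, (Nat.div_lt_iff_lt_mul hHS).mpr h⟩ i ⟨j % HS, Nat.mod_lt _ hHS⟩
          * u ⟨j % HS, Nat.mod_lt _ hHS⟩
    else if h2 : j - HT / HS * HS < HT % HS
    then Mres i ⟨j - HT / HS * HS, h2⟩ * u ⟨j % HS, Nat.mod_lt _ hHS⟩
    else 0 with hg
  have h1 : ∑ j : Fin HT, colCirc HS HT P hHS Ms Mres i j * u ⟨j.val % HS, Nat.mod_lt _ hHS⟩
      = ∑ j ∈ Finset.range HT, g j := by
    rw [← Fin.sum_univ_eq_sum_range]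
    refine Finset.sum_congr rfl fun j _ => ?_
    by_cases h : (j : ℕ) < HT / HS * HS
    · simp only [hg, colCirc, dif_pos h]
    · have h2 : (j : ℕ) - HT / HS * HS < HT % HS :=
        sub_lt_mod HS HT j.val hHS j.isLt (le_of_not_gt h)
      simp only [hg, colCirc, dif_neg h, dif_pos h2]
  have hDD : HT = HT / HS * HS + HT % HS := (Nat.div_add_mod' HT HS).symm
  rw [h1]
  conv_lhs => rw [hDD]
  rw [sum_range_add', sum_range_blocks]
  -- the block part
  have hblock : ∀ l ∈ Finset.range (HT / HS), ∀ m ∈ Finset.range HS,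
      g (l * HS + m) = Ms ⟨l % (HT / HS), Nat.mod_lt _ hk0⟩ i ⟨m % HS, Nat.mod_lt _ hHS⟩
        * u ⟨m % HS, Nat.mod_lt _ hHS⟩ := by
    intro l hl m hm
    rw [Finset.mem_range] at hl hm
    have hlt : l * HS + m < HT / HS * HS := by
      calc l * HS + m < (l + 1) * HS := by rw [Nat.succ_mul]; omega
        _ ≤ HT / HS * HS := Nat.mul_le_mul_right _ hl
    have hdiv : (l * HS + m) / HS = l := by
      rw [Nat.mul_comm l HS, Nat.mul_add_div hHS, Nat.div_eq_of_lt hm, Nat.add_zero]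
    have hmod : (l * HS + m) % HS = m := by
      rw [Nat.mul_comm l HS, Nat.mul_add_mod, Nat.mod_eq_of_lt hm]
    simp only [hg]
    rw [dif_pos hlt]
    congr 2 <;>
      exact Fin.ext (by simp [hdiv, hmod, Nat.mod_eq_of_lt hl, Nat.mod_eq_of_lt hm])
  rw [Finset.sum_congr rfl (fun l hl => Finset.sum_congr rfl (hblock l hl))]
  -- the tail part, as a Fin sum
  have htail : ∑ j ∈ Finset.range (HT % HS), g (HT / HS * HS + j)
      = ∑ j : Fin (HT % HS), Mres i j * u ⟨j.val, j.isLt.trans hrHS⟩ := by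
    rw [← Fin.sum_univ_eq_sum_range (fun j => g (HT / HS * HS + j))]
    refine Finset.sum_congr rfl fun j _ => ?_
    have h : ¬ (HT / HS * HS + (j : ℕ) < HT / HS * HS) := by omega
    have h2 : HT / HS * HS + (j : ℕ) - HT / HS * HS < HT % HS := by
      have := j.isLt; omega
    have e1 : HT / HS * HS + (j : ℕ) - HT / HS * HS = (j : ℕ) := by omega
    have e2 : (HT / HS * HS + (j : ℕ)) % HS = (j : ℕ) := by
      rw [Nat.mul_comm, Nat.mul_add_mod]
      exact Nat.mod_eq_of_lt (j.isLt.trans hrHS)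
    simp only [hg]
    rw [dif_neg h, dif_pos h2]
    congr 2
    · exact Fin.ext e1
    · exact Fin.ext e2
  rw [htail]
  -- collapse the block double sum
  have hsumS : ∑ l ∈ Finset.range (HT / HS), ∑ m ∈ Finset.range HS,
      Ms ⟨l % (HT / HS), Nat.mod_lt _ hk0⟩ i ⟨m % HS, Nat.mod_lt _ hHS⟩
        * u ⟨m % HS, Nat.mod_lt _ hHS⟩
      = ∑ m : Fin HS, (∑ l, Ms l i m) * u m := by
    rw [Finset.sum_comm]
    rw [← Fin.sum_univ_eq_sum_range
      (fun m => ∑ l ∈ Finset.range (HT / HS),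
        Ms ⟨l % (HT / HS), Nat.mod_lt _ hk0⟩ i ⟨m % HS, Nat.mod_lt _ hHS⟩
          * u ⟨m % HS, Nat.mod_lt _ hHS⟩)]
    refine Finset.sum_congr rfl fun m _ => ?_
    have hm : (⟨(m : ℕ) % HS, Nat.mod_lt _ hHS⟩ : Fin HS) = m :=
      Fin.ext (Nat.mod_eq_of_lt m.isLt)
    rw [hm, ← Finset.sum_mul]
    congr 1
    rw [← Fin.sum_univ_eq_sum_range (fun l => Ms ⟨l % (HT / HS), Nat.mod_lt _ hk0⟩ i m)]
    refine Finset.sum_congr rfl fun l _ => ?_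
    congr 1
    exact Fin.ext (Nat.mod_eq_of_lt l.isLt)
  rw [hsumS]
  -- identify the tail sum with a difference over all of Fin HS
  set F : ℕ → ℝ := fun m => if h : m < HS
    then (W2 i ⟨m, h⟩ - ∑ l, Ms l i ⟨m, h⟩) * u ⟨m, h⟩ else 0 with hF
  have hdiff : ∑ j : Fin (HT % HS), Mres i j * u ⟨j.val, j.isLt.trans hrHS⟩
      = ∑ m : Fin HS, (W2 i m - ∑ l, Ms l i m) * u m := by
    have hr1 : ∑ m : Fin HS, (W2 i m - ∑ l, Ms l i m) * u m
        = ∑ m ∈ Finset.range HS, F m := by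
      rw [← Fin.sum_univ_eq_sum_range]
      refine Finset.sum_congr rfl fun m _ => ?_
      simp only [hF]
      rw [dif_pos m.isLt]
    have hr2 : ∑ m ∈ Finset.range (HT % HS), F m = ∑ m ∈ Finset.range HS, F m := by
      refine Finset.sum_subset (Finset.range_subset_range.mpr hrHS.le) fun m hm hm2 => ?_
      rw [Finset.mem_range] at hm
      rw [Finset.mem_range, not_lt] at hm2
      simp only [hF]
      rw [dif_pos hm, hrest i ⟨m, hm⟩ hm2, sub_self, zero_mul]
    have hr3 : ∑ j : Fin (HT % HS), Mres i j * u ⟨j.val, j.isLt.trans hrHS⟩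
        = ∑ m ∈ Finset.range (HT % HS), F m := by
      rw [← Fin.sum_univ_eq_sum_range]
      refine Finset.sum_congr rfl fun j _ => ?_
      simp only [hF]
      rw [dif_pos (j.isLt.trans hrHS)]
      have := hres i j
      have hM : Mres i j = W2 i ⟨j.val, j.isLt.trans hrHS⟩
          - ∑ l, Ms l i ⟨j.val, j.isLt.trans hrHS⟩ := by
        rw [eq_sub_iff_add_eq]
        exact hres i j
      rw [hM]
    rw [hr3, hr2, ← hr1]
  rw [hdiff, ← Finset.sum_add_distrib]
  refine Finset.sum_congr rfl fun m _ => ?_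
  ring

end Helpers

/-- lossless MLP expansion: with
`W₁* = colRand` of the row-circular expansion of `W₁`, `b₁* = V_circ(b₁)`,
`W₂* = rowAvg` of a column-circular expansion of `W₂`, and `b₂* = V_avg(b₂)`,
one has `W₂*·σ(W₁*·V_zero(x) + b₁*) + b₂* = V_avg(W₂·σ(W₁·x + b₁) + b₂)`. -/
theorem stmt_14 (DS DT HS HT : ℕ) (hDS : 0 < DS) (hDT : DS ≤ DT)
    (hHS : 0 < HS) (hHT : HS ≤ HT)
    (W1 : Matrix (Fin HS) (Fin DS) ℝ) (b1 : Fin HS → ℝ)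
    (W2 : Matrix (Fin DS) (Fin HS) ℝ) (b2 : Fin DS → ℝ) (σ : ℝ → ℝ)
    -- (1) column-random expansion data for the row-circular expansion of `W₁`
    (N1s : Fin (DT / DS) → Matrix (Fin HT) (Fin DS) ℝ)
    (hN1s : ∑ l, N1s l = rowCirc HS HT DS hHS W1)
    (Z : Matrix (Fin HT) (Fin (DT % DS)) ℝ)
    -- (2) column-circular expansion data for `W₂`
    (W2s : Fin (HT / HS) → Matrix (Fin DS) (Fin HS) ℝ)
    (W2res : Matrix (Fin DS) (Fin (HT % HS)) ℝ)
    (hres : ∀ (i : Fin DS) (j : Fin (HT % HS)),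
      W2res i j + ∑ l, W2s l i ⟨j.val, j.isLt.trans (Nat.mod_lt HT hHS)⟩
        = W2 i ⟨j.val, j.isLt.trans (Nat.mod_lt HT hHS)⟩)
    (hrest : ∀ (i : Fin DS) (j : Fin HS), HT % HS ≤ j.val → ∑ l, W2s l i j = W2 i j)
    (x : Fin DS → ℝ) :
    (rowAvg DS DT HT hDS (colCirc HS HT DS hHS W2s W2res)).mulVec
        (fun i => σ (((colRand DS DT HT hDS N1s Z).mulVec (vZero DS DT hDS x)
          + vCirc HS HT hHS b1) i))
      + vAvg DS DT hDS b2
    = vAvg DS DT hDS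
        (W2.mulVec (fun i => σ ((W1.mulVec x + b1) i)) + b2) := by
  classical
  set u : Fin HS → ℝ := fun m => σ ((W1.mulVec x + b1) m) with hu
  have hinner : ∀ j : Fin HT,
      σ (((colRand DS DT HT hDS N1s Z).mulVec (vZero DS DT hDS x)
        + vCirc HS HT hHS b1) j) = u ⟨j.val % HS, Nat.mod_lt _ hHS⟩ := by
    intro j
    have hsum : ∑ m : Fin DS, (∑ l, N1s l j m) * x m
        = W1.mulVec x ⟨j.val % HS, Nat.mod_lt _ hHS⟩ := by
      simp only [Matrix.mulVec, dotProduct]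
      refine Finset.sum_congr rfl fun m _ => ?_
      congr 1
      have h := congrFun (congrFun hN1s j) m
      simpa [rowCirc, Matrix.sum_apply] using h
    rw [Pi.add_apply, keyC DS DT HT hDS hDT N1s Z x j, hsum]
    rfl
  funext i
  have hrowfun : ∀ j : Fin HT,
      (fun j : Fin HT => σ (((colRand DS DT HT hDS N1s Z).mulVec (vZero DS DT hDS x)
        + vCirc HS HT hHS b1) j)) j = u ⟨j.val % HS, Nat.mod_lt _ hHS⟩ := hinner
  by_cases hi : (i : ℕ) < DT / DS * DS
  · -- row in the repeated part
    have hmv : (rowAvg DS DT HT hDS (colCirc HS HT DS hHS W2s W2res)).mulVec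
        (fun j => σ (((colRand DS DT HT hDS N1s Z).mulVec (vZero DS DT hDS x)
          + vCirc HS HT hHS b1) j)) i
        = ∑ j : Fin HT, colCirc HS HT DS hHS W2s W2res ⟨i.val % DS, Nat.mod_lt _ hDS⟩ j
            * u ⟨j.val % HS, Nat.mod_lt _ hHS⟩ := by
      simp only [Matrix.mulVec, dotProduct, rowAvg, if_pos hi]
      exact Finset.sum_congr rfl fun j _ => by rw [hinner j]
    rw [Pi.add_apply, hmv, keyD HS HT DS hHS hHT W2s W2res W2 hres hrest u _]
    simp only [vAvg, if_pos hi, Pi.add_apply]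
    congr 1
  · -- row in the averaged part
    have hmv : (rowAvg DS DT HT hDS (colCirc HS HT DS hHS W2s W2res)).mulVec
        (fun j => σ (((colRand DS DT HT hDS N1s Z).mulVec (vZero DS DT hDS x)
          + vCirc HS HT hHS b1) j)) i
        = ∑ j : Fin HT, (∑ l : Fin DS, colCirc HS HT DS hHS W2s W2res l j
            * u ⟨j.val % HS, Nat.mod_lt _ hHS⟩) / (DS : ℝ) := by
      simp only [Matrix.mulVec, dotProduct, rowAvg, if_neg hi]
      refine Finset.sum_congr rfl fun j _ => ?_
      rw [hinner j, div_mul_eq_mul_div, Finset.sum_mul]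
    rw [Pi.add_apply, hmv, ← Finset.sum_div, Finset.sum_comm]
    have hl : ∀ l : Fin DS, ∑ j : Fin HT, colCirc HS HT DS hHS W2s W2res l j
        * u ⟨j.val % HS, Nat.mod_lt _ hHS⟩ = ∑ m : Fin HS, W2 l m * u m :=
      fun l => keyD HS HT DS hHS hHT W2s W2res W2 hres hrest u l
    rw [Finset.sum_congr rfl fun l _ => hl l]
    simp only [vAvg, if_neg hi, Pi.add_apply]
    rw [← add_div]
    congr 1
    rw [← Finset.sum_add_distrib]
    refine Finset.sum_congr rfl fun l _ => ?_
    simp only [Pi.add_apply, Matrix.mulVec, dotProduct]
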